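/- arXiv:1412.5734 — 2 statements merged into one kernel-verified Lean document; each statement's English description precedes it below -/
import Mathlib

section
/- For any positive integers r, m, n and any nonnegative integer a, every coefficient of the multivariable polynomial ∑_{k=0}^{n−1} (−1)^k (2k+1) · k^a · (k+1)^a · S_k^{(r)}(x_0,…,x_k)^m (a polynomial in x_0,…,x_{n−1} with integer coefficients) is divisible by n. -/
/-- The multi-variable Schmidt polynomial
`S_n^{(r)}(x_0,…,x_n) := ∑_{k=0}^{n} C(n+k,2k)^r · C(2k,k) · x_k`. -/
noncomputable def schmidtMv (r n : ℕ) : MvPolynomial ℕ ℤ :=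
  ∑ k ∈ Finset.range (n + 1),
    MvPolynomial.C ((((n + k).choose (2 * k)) ^ r * ((2 * k).choose k) : ℕ) : ℤ) *
      MvPolynomial.X k

namespace SchmidtAux

open Finset


/-- `Bf l k = C(k+l, 2l) * C(2l, l)`. -/
def Bf (l k : ℕ) : ℕ := (k + l).choose (2 * l) * (2 * l).choose l

lemma Bf_def (l k : ℕ) : Bf l k = (k + l).choose (2 * l) * (2 * l).choose l := rfl

lemma Bf_eq (l k : ℕ) : Bf l k = (k + l).choose l * k.choose l := by
  unfold Bf
  rcases le_or_gt l k with h | h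
  · have h1 := Nat.choose_mul (n := k + l) (k := 2 * l) (s := l) (by omega)
    have h2 : k + l - l = k := by omega
    have h3 : 2 * l - l = l := by omega
    rw [h2, h3] at h1
    exact h1
  · have h1 : (k + l).choose (2 * l) = 0 := Nat.choose_eq_zero_of_lt (by omega)
    have h2 : k.choose l = 0 := Nat.choose_eq_zero_of_lt h
    simp [h1, h2]

lemma Bf_zero (k : ℕ) : Bf 0 k = 1 := by simp [Bf]

/-- `(N - i) * C(N,i) = (i+1) * C(N,i+1)` over `ℤ`, universally. -/
lemma A1 (N i : ℕ) : ((N : ℤ) - i) * N.choose i = ((i : ℤ) + 1) * N.choose (i + 1) := by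
  rcases le_or_gt i N with h | h
  · have := Nat.choose_succ_right_eq N i
    have hc : ((N.choose (i+1) * (i+1) : ℕ) : ℤ) = ((N.choose i * (N - i) : ℕ) : ℤ) := by
      exact_mod_cast congrArg (Nat.cast : ℕ → ℤ) this
    push_cast [Nat.cast_sub h] at hc
    linarith
  · have h1 : N.choose i = 0 := Nat.choose_eq_zero_of_lt h
    have h2 : N.choose (i + 1) = 0 := Nat.choose_eq_zero_of_lt (by omega)
    simp [h1, h2]

/-- `(l+1) * C(l,i) = (i+1) * C(l+1,i+1)` over `ℤ`. -/
lemma A2 (l i : ℕ) : ((l : ℤ) + 1) * l.choose i = ((i : ℤ) + 1) * (l + 1).choose (i + 1) := by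
  have h := Nat.add_one_mul_choose_eq l i
  have h2 : (l + 1) * l.choose i = (i + 1) * (l + 1).choose (i + 1) := by rw [h]; ring
  exact_mod_cast h2

/-- Key one-step identity: `k(k+1)·B_t(k) = t(t+1)·B_t(k) + (t+1)²·B_{t+1}(k)`. -/
lemma step1 (t k : ℕ) :
    ((k : ℤ) * ((k : ℤ) + 1)) * (Bf t k : ℤ)
      = ((t : ℤ) * ((t : ℤ) + 1)) * (Bf t k : ℤ) + ((t : ℤ) + 1) ^ 2 * (Bf (t + 1) k : ℤ) := by
  rw [Bf_eq, Bf_eq]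
  have e1 : ((k : ℤ) + t + 1) * (k + t).choose t = ((t : ℤ) + 1) * (k + t + 1).choose (t + 1) := by
    have h := Nat.add_one_mul_choose_eq (k + t) t
    have h2 : (k + t + 1) * (k + t).choose t = (t + 1) * (k + t + 1).choose (t + 1) := by
      rw [h]; ring
    exact_mod_cast h2
  have e2 : ((k : ℤ) - t) * k.choose t = ((t : ℤ) + 1) * k.choose (t + 1) := A1 k t
  have harg : k + (t + 1) = k + t + 1 := by omega
  rw [harg]
  push_cast
  linear_combination (((k : ℤ) - t) * (k.choose t : ℤ)) * e1
    + (((t : ℤ) + 1) * ((k + t + 1).choose (t + 1) : ℤ)) * e2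

/-- The `(★)` identity used in the product-expansion induction. -/
lemma star (i j l : ℕ) :
    (((l : ℤ) + 1) * ((l : ℤ) + 2) - (i : ℤ) * ((i : ℤ) + 1)) *
        (((l + 1).choose i : ℤ) * ((l + 1).choose j : ℤ) * ((i + j).choose (l + 1) : ℤ))
      + ((l : ℤ) + 1) ^ 2 *
        ((l.choose i : ℤ) * (l.choose j : ℤ) * ((i + j).choose l : ℤ))
      = ((i : ℤ) + 1) ^ 2 *
        (((l + 1).choose (i + 1) : ℤ) * ((l + 1).choose j : ℤ) * ((i + j + 1).choose (l + 1) : ℤ)) := by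
  have h_a : ((l : ℤ) + 1 - i) * (l + 1).choose i = ((i : ℤ) + 1) * (l + 1).choose (i + 1) := by
    have := A1 (l + 1) i; push_cast at this ⊢; linarith
  have h_c : ((i : ℤ) + j - l) * (i + j).choose l = ((l : ℤ) + 1) * (i + j).choose (l + 1) := by
    have := A1 (i + j) l; push_cast at this ⊢; linarith
  have h1 : ((l : ℤ) + 1) * l.choose i = ((i : ℤ) + 1) * (l + 1).choose (i + 1) := A2 l i
  have h_d : ((l : ℤ) + 1) * l.choose j = ((l : ℤ) + 1 - j) * (l + 1).choose j := by
    have h2 := A2 l j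
    have h3 : ((l : ℤ) + 1 - j) * (l + 1).choose j = ((j : ℤ) + 1) * (l + 1).choose (j + 1) := by
      have := A1 (l + 1) j; push_cast at this ⊢; linarith
    rw [h2, h3]
  have e1 : (((l : ℤ) + 1) * l.choose i) * (((l : ℤ) + 1) * l.choose j)
      = (((i : ℤ) + 1) * (l + 1).choose (i + 1)) * (((l : ℤ) + 1 - j) * (l + 1).choose j) := by
    rw [h1, h_d]
  have pascal : ((i + j + 1).choose (l + 1) : ℤ) = (i + j).choose l + (i + j).choose (l + 1) := by
    have := Nat.choose_succ_succ (i + j) l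
    exact_mod_cast this
  linear_combination (((i + j).choose l : ℤ)) * e1
    - (((i : ℤ) + 1) ^ 2 * ((l + 1).choose (i + 1) : ℤ) * ((l + 1).choose j : ℤ)) * pascal
    - (((i : ℤ) + 1) * ((l + 1).choose (i + 1) : ℤ) * ((l + 1).choose j : ℤ)) * h_c
    + (((l : ℤ) + (i : ℤ) + 2) * ((i + j).choose (l + 1) : ℤ) * ((l + 1).choose j : ℤ)) * h_a

/-- Product expansion: `B_i·B_j = ∑_l C(l,i)C(l,j)C(i+j,l)·B_l`. -/
lemma prod_expand (i j k : ℕ) :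
    (Bf i k : ℤ) * (Bf j k : ℤ)
      = ∑ l ∈ range (i + j + 1),
          (l.choose i : ℤ) * (l.choose j : ℤ) * ((i + j).choose l : ℤ) * (Bf l k : ℤ) := by
  induction i with
  | zero =>
      rw [Bf_zero]
      rw [Finset.sum_eq_single j]
      · simp
      · intro l hl hne
        have hl' : l < j + 1 := by simpa using hl
        have : l.choose j = 0 := Nat.choose_eq_zero_of_lt (by omega)
        simp [this]
      · intro h
        exact absurd (self_mem_range_succ j) (by simpa using h)
  | succ i IH =>
      have hne : ((i : ℤ) + 1) ^ 2 ≠ 0 := by positivity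
      apply mul_left_cancel₀ hne
      have h0 : ((i : ℤ) + 1) ^ 2 * ((Bf (i + 1) k : ℤ) * (Bf j k : ℤ))
          = ((k : ℤ) * ((k : ℤ) + 1) - (i : ℤ) * ((i : ℤ) + 1)) * ((Bf i k : ℤ) * (Bf j k : ℤ)) := by
        linear_combination (-(Bf j k : ℤ)) * step1 i k
      rw [h0, IH, Finset.mul_sum]
      -- transform each term and then reindex
      have hterm : ∀ l,
          ((k : ℤ) * ((k : ℤ) + 1) - (i : ℤ) * ((i : ℤ) + 1)) *
              ((l.choose i : ℤ) * (l.choose j : ℤ) * ((i + j).choose l : ℤ) * (Bf l k : ℤ))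
            = (((l : ℤ) * ((l : ℤ) + 1) - (i : ℤ) * ((i : ℤ) + 1)) *
                ((l.choose i : ℤ) * (l.choose j : ℤ) * ((i + j).choose l : ℤ)) * (Bf l k : ℤ))
              + (((l : ℤ) + 1) ^ 2 *
                ((l.choose i : ℤ) * (l.choose j : ℤ) * ((i + j).choose l : ℤ)) * (Bf (l + 1) k : ℤ)) := by
        intro l
        linear_combination ((l.choose i : ℤ) * (l.choose j : ℤ) * ((i + j).choose l : ℤ)) * step1 l k
      rw [Finset.sum_congr rfl (fun l _ => hterm l), Finset.sum_add_distrib]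
      -- names
      set F : ℕ → ℤ := fun l => ((l : ℤ) * ((l : ℤ) + 1) - (i : ℤ) * ((i : ℤ) + 1)) *
          ((l.choose i : ℤ) * (l.choose j : ℤ) * ((i + j).choose l : ℤ)) * (Bf l k : ℤ) with hF
      set G : ℕ → ℤ := fun l => ((l : ℤ) + 1) ^ 2 *
          ((l.choose i : ℤ) * (l.choose j : ℤ) * ((i + j).choose l : ℤ)) * (Bf (l + 1) k : ℤ) with hG
      set H : ℕ → ℤ := fun l => ((i : ℤ) + 1) ^ 2 *
          ((l.choose (i + 1) : ℤ) * (l.choose j : ℤ) * ((i + j + 1).choose l : ℤ) * (Bf l k : ℤ)) with hH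
      have hij : i + 1 + j = i + j + 1 := by omega
      -- goal: ∑_{range(i+j+1)} F + ∑_{range(i+j+1)} G = ∑_{range(i+j+2)} H
      have key : ∀ l, H (l + 1) = F (l + 1) + G l := by
        intro l
        have hs := star i j l
        simp only [hH, hF, hG]
        push_cast
        linear_combination (-(Bf (l + 1) k : ℤ)) * hs
      have hH0 : H 0 = F 0 := by
        simp only [hH, hF]
        rcases Nat.eq_zero_or_pos i with hi | hi
        · subst hi; norm_num
        · have : (0 : ℕ).choose i = 0 := Nat.choose_eq_zero_of_lt (by omega)
          have h2 : (0 : ℕ).choose (i + 1) = 0 := Nat.choose_eq_zero_of_lt (by omega)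
          simp [this, h2]
      have hFtop : F (i + j + 1) = 0 := by
        simp only [hF]
        have : (i + j).choose (i + j + 1) = 0 := Nat.choose_eq_zero_of_lt (by omega)
        simp [this]
      calc ∑ l ∈ range (i + j + 1), F l + ∑ l ∈ range (i + j + 1), G l
          = (∑ l ∈ range (i + j + 1), F (l + 1) + F 0) + ∑ l ∈ range (i + j + 1), G l := by
            rw [← Finset.sum_range_succ' F (i + j + 1), Finset.sum_range_succ F (i + j + 1), hFtop,
              add_zero]
        _ = ∑ l ∈ range (i + j + 1), (F (l + 1) + G l) + F 0 := by
            rw [Finset.sum_add_distrib]; ring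
        _ = ∑ l ∈ range (i + j + 1), H (l + 1) + H 0 := by rw [hH0]; simp [key]
        _ = ∑ l ∈ range (i + j + 1 + 1), H l := (Finset.sum_range_succ' H (i + j + 1)).symm
        _ = ((i : ℤ) + 1) ^ 2 * ∑ l ∈ range (i + 1 + j + 1),
              ((l.choose (i + 1) : ℤ) * (l.choose j : ℤ) * ((i + 1 + j).choose l : ℤ) * (Bf l k : ℤ)) := by
            rw [Finset.mul_sum]
            simp only [hH, hij]

/-- The alternating-sum closed form: `∑_{k<n} (-1)^k (2k+1) B_j(k) = (-1)^{n+1} n C(n+j,j) C(n-1,j)`. -/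
lemma sum_B (j n : ℕ) :
    ∑ k ∈ range n, (-1 : ℤ) ^ k * (2 * (k : ℤ) + 1) * (Bf j k : ℤ)
      = (-1 : ℤ) ^ (n + 1) * n * ((n + j).choose j : ℤ) * ((n - 1).choose j : ℤ) := by
  induction n with
  | zero => simp
  | succ n IH =>
      rw [Finset.sum_range_succ, IH]
      have f1 : ((n : ℤ) + 1) * ((n + 1 + j).choose j : ℤ)
          = ((n : ℤ) + (j : ℤ) + 1) * ((n + j).choose j : ℤ) := by
        have s1 : (n + 1 + j).choose j = (n + j + 1).choose (n + 1) := by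
          rw [show n + 1 + j = j + (n + 1) from by omega, Nat.choose_symm_add,
            show j + (n + 1) = n + j + 1 from by omega]
        have s2 : (n + j).choose n = (n + j).choose j := Nat.choose_symm_add
        have h := Nat.add_one_mul_choose_eq (n + j) n
        have h2 : (n + 1) * (n + 1 + j).choose j = (n + j + 1) * (n + j).choose j := by
          rw [s1, ← s2]
          calc (n + 1) * (n + j + 1).choose (n + 1)
              = (n + j + 1).choose (n + 1) * (n + 1) := by ring
            _ = (n + j + 1) * (n + j).choose n := h.symm
        exact_mod_cast h2
      have f2 : (n : ℤ) * (((n : ℕ) - 1).choose j : ℤ) = ((n : ℤ) - j) * ((n).choose j : ℤ) := by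
        cases n with
        | zero =>
            rcases Nat.eq_zero_or_pos j with hj | hj
            · subst hj; simp
            · simp [Nat.choose_eq_zero_of_lt hj]
        | succ n' =>
            have h1 := A2 n' j
            have h2 := A1 (n' + 1) j
            have h3 : (n' + 1 : ℕ) - 1 = n' := by omega
            rw [h3]
            push_cast at h1 h2 ⊢
            linarith
      have hb : (Bf j (n) : ℤ) = ((n + j).choose j : ℤ) * ((n).choose j : ℤ) := by
        rw [Bf_eq]; push_cast; ring
      have hnn : (n + 1 : ℕ) - 1 = n := by omega
      rw [hnn, hb]
      push_cast
      linear_combination (-((-1 : ℤ)) ^ n * ((n).choose j : ℤ)) * f1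
        + (-((-1 : ℤ)) ^ n * (((n + j).choose j : ℤ))) * f2

/-- The diamond identity: `C(l,j)·C(t,l)·C(l+j,t) = C(2j,j)·C(l+j,2j)·C(j,t-l)` (with the
convention that the RHS is `0` when `t < l`). -/
lemma diamond (j l t : ℕ) :
    (l.choose j : ℤ) * (t.choose l : ℤ) * ((l + j).choose t : ℤ)
      = if l ≤ t then ((2 * j).choose j : ℤ) * ((l + j).choose (2 * j) : ℤ) * (j.choose (t - l) : ℤ)
        else 0 := by
  split_ifs with h
  · rcases le_or_gt t (l + j) with h2 | h2
    · have e1 := Nat.choose_mul (n := l + j) (k := t) (s := l) h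
      have e2 : l + j - l = j := by omega
      rw [e2] at e1
      -- e1 : (l+j).choose t * t.choose l = (l+j).choose l * j.choose (t - l)
      have e3 : (l + j).choose (2 * j) * (2 * j).choose j = (l + j).choose j * l.choose j := by
        rw [← Bf_eq, Bf_def]
      have e4 : (l + j).choose l = (l + j).choose j := Nat.choose_symm_add
      have : l.choose j * (t.choose l * (l + j).choose t)
          = (2 * j).choose j * (l + j).choose (2 * j) * j.choose (t - l) := by
        calc l.choose j * (t.choose l * (l + j).choose t)
            = l.choose j * ((l + j).choose t * t.choose l) := by ring
          _ = l.choose j * ((l + j).choose l * j.choose (t - l)) := by rw [e1]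
          _ = ((l + j).choose j * l.choose j) * j.choose (t - l) := by rw [e4]; ring
          _ = ((l + j).choose (2 * j) * (2 * j).choose j) * j.choose (t - l) := by rw [e3]
          _ = (2 * j).choose j * (l + j).choose (2 * j) * j.choose (t - l) := by ring
      exact_mod_cast by push_cast [← this]; ring
    · have z1 : (l + j).choose t = 0 := Nat.choose_eq_zero_of_lt h2
      have z2 : j.choose (t - l) = 0 := Nat.choose_eq_zero_of_lt (by omega)
      simp [z1, z2]
  · have : t.choose l = 0 := Nat.choose_eq_zero_of_lt (by omega)
    simp [this]

/-- Claim C: `C(k+j,2j)^s · B_j(k)` is an integer combination of the `B_l(k)` whose `l`-th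
coefficient is divisible by `C(l,j)`. -/
lemma pow_good (j s : ℕ) : ∃ N : ℕ, ∃ μ : ℕ → ℤ, ∀ k : ℕ,
    (((k + j).choose (2 * j) : ℤ)) ^ s * (Bf j k : ℤ)
      = ∑ l ∈ range (N + 1), (l.choose j : ℤ) * μ l * (Bf l k : ℤ) := by
  induction s with
  | zero =>
      refine ⟨j, fun l => if l = j then 1 else 0, fun k => ?_⟩
      rw [pow_zero, one_mul]
      simp only [mul_ite, mul_one, mul_zero, ite_mul, zero_mul]
      rw [Finset.sum_ite_eq' (range (j + 1)) j (fun l => (l.choose j : ℤ) * (Bf l k : ℤ))]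
      simp [Nat.choose_self]
  | succ s IH =>
      obtain ⟨N, μ, hμ⟩ := IH
      refine ⟨N + j, fun t => ∑ l ∈ range (N + 1),
        (if l ≤ t then μ l * (((l + j).choose (2 * j) : ℤ)) * ((j.choose (t - l) : ℤ)) else 0),
        fun k => ?_⟩
      have hC : ((2 * j).choose j : ℤ) ≠ 0 := by
        exact_mod_cast (Nat.choose_pos (by omega)).ne'
      apply mul_left_cancel₀ hC
      have hBjk : ((k + j).choose (2 * j) : ℤ) * ((2 * j).choose j : ℤ) = (Bf j k : ℤ) := by
        rw [Bf_def]; push_cast; ring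
      calc ((2 * j).choose j : ℤ) * ((((k + j).choose (2 * j) : ℤ)) ^ (s + 1) * (Bf j k : ℤ))
          = ((((k + j).choose (2 * j) : ℤ)) ^ s * (Bf j k : ℤ))
              * (((k + j).choose (2 * j) : ℤ) * ((2 * j).choose j : ℤ)) := by ring
        _ = (∑ l ∈ range (N + 1), (l.choose j : ℤ) * μ l * (Bf l k : ℤ)) * (Bf j k : ℤ) := by
            rw [hμ, hBjk]
        _ = ∑ l ∈ range (N + 1), (l.choose j : ℤ) * μ l * ((Bf l k : ℤ) * (Bf j k : ℤ)) := by
            rw [Finset.sum_mul]; exact Finset.sum_congr rfl fun l _ => by ring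
        _ = ∑ l ∈ range (N + 1), (l.choose j : ℤ) * μ l *
              (∑ u ∈ range (N + j + 1),
                (u.choose l : ℤ) * (u.choose j : ℤ) * ((l + j).choose u : ℤ) * (Bf u k : ℤ)) := by
            refine Finset.sum_congr rfl fun l hl => ?_
            rw [prod_expand l j k]
            congr 1
            refine Finset.sum_subset (Finset.range_subset_range.mpr (by simp at hl; omega)) ?_
            intro u hu hnu
            have : (l + j).choose u = 0 := by
              apply Nat.choose_eq_zero_of_lt
              simp at hnu; omega
            simp [this]
        _ = ∑ u ∈ range (N + j + 1), ∑ l ∈ range (N + 1),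
              (l.choose j : ℤ) * μ l *
                ((u.choose l : ℤ) * (u.choose j : ℤ) * ((l + j).choose u : ℤ) * (Bf u k : ℤ)) := by
            rw [Finset.sum_comm]
            exact Finset.sum_congr rfl fun l _ => Finset.mul_sum _ _ _
        _ = ∑ u ∈ range (N + j + 1), ∑ l ∈ range (N + 1), ((2 * j).choose j : ℤ) *
              ((u.choose j : ℤ) *
                (if l ≤ u then μ l * (((l + j).choose (2 * j) : ℤ)) * ((j.choose (u - l) : ℤ))
                  else 0) * (Bf u k : ℤ)) := by
            refine Finset.sum_congr rfl fun u _ => Finset.sum_congr rfl fun l _ => ?_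
            have hd := diamond j l u
            by_cases h : l ≤ u
            · rw [if_pos h]; rw [if_pos h] at hd
              linear_combination (μ l * (u.choose j : ℤ) * (Bf u k : ℤ)) * hd
            · rw [if_neg h]; rw [if_neg h] at hd
              linear_combination (μ l * (u.choose j : ℤ) * (Bf u k : ℤ)) * hd
        _ = ∑ u ∈ range (N + j + 1), ((2 * j).choose j : ℤ) *
              ((u.choose j : ℤ) * (∑ l ∈ range (N + 1),
                (if l ≤ u then μ l * (((l + j).choose (2 * j) : ℤ)) * ((j.choose (u - l) : ℤ))
                  else 0)) * (Bf u k : ℤ)) := by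
            refine Finset.sum_congr rfl fun u _ => ?_
            conv_rhs => rw [Finset.mul_sum, Finset.sum_mul, Finset.mul_sum]
        _ = ((2 * j).choose j : ℤ) * ∑ u ∈ range (N + j + 1),
              (u.choose j : ℤ) * (∑ l ∈ range (N + 1),
                (if l ≤ u then μ l * (((l + j).choose (2 * j) : ℤ)) * ((j.choose (u - l) : ℤ))
                  else 0)) * (Bf u k : ℤ) := by
            rw [Finset.mul_sum]

/-- A function `ℕ → ℤ` is *good* if it is a finite `ℤ`-linear combination of the `Bf l ·`. -/
def IsGood (f : ℕ → ℤ) : Prop :=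
  ∃ N : ℕ, ∃ c : ℕ → ℤ, ∀ k, f k = ∑ l ∈ range (N + 1), c l * (Bf l k : ℤ)

lemma IsGood.congr {f g : ℕ → ℤ} (h : ∀ k, f k = g k) (hg : IsGood g) : IsGood f := by
  obtain ⟨N, c, hc⟩ := hg
  exact ⟨N, c, fun k => (h k).trans (hc k)⟩

lemma extend_sum (N M : ℕ) (h : N ≤ M) (c : ℕ → ℤ) (k : ℕ) :
    ∑ l ∈ range (N + 1), c l * (Bf l k : ℤ)
      = ∑ l ∈ range (M + 1), (if l ≤ N then c l else 0) * (Bf l k : ℤ) := by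
  rw [← Finset.sum_subset (Finset.range_subset_range.mpr (by omega : N + 1 ≤ M + 1))
    (fun x _ hx => by
      have : ¬ x ≤ N := by simp at hx; omega
      simp [this])]
  exact Finset.sum_congr rfl fun l hl => by
    have : l ≤ N := by simp at hl; omega
    simp [this]

lemma isGood_const (z : ℤ) : IsGood (fun _ => z) :=
  ⟨0, fun _ => z, fun k => by simp [Bf_zero]⟩

lemma IsGood.add {f g : ℕ → ℤ} (hf : IsGood f) (hg : IsGood g) :
    IsGood (fun k => f k + g k) := by
  obtain ⟨N1, c1, h1⟩ := hf
  obtain ⟨N2, c2, h2⟩ := hg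
  refine ⟨max N1 N2, fun l => (if l ≤ N1 then c1 l else 0) + (if l ≤ N2 then c2 l else 0),
    fun k => ?_⟩
  dsimp only
  rw [h1 k, h2 k, extend_sum N1 (max N1 N2) (le_max_left _ _) c1 k,
    extend_sum N2 (max N1 N2) (le_max_right _ _) c2 k, ← Finset.sum_add_distrib]
  exact Finset.sum_congr rfl fun l _ => by ring

lemma IsGood.mul {f g : ℕ → ℤ} (hf : IsGood f) (hg : IsGood g) :
    IsGood (fun k => f k * g k) := by
  obtain ⟨N1, c1, h1⟩ := hf
  obtain ⟨N2, c2, h2⟩ := hg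
  refine ⟨N1 + N2, fun u => ∑ l ∈ range (N1 + 1), ∑ t ∈ range (N2 + 1),
    c1 l * c2 t * ((u.choose l : ℤ) * (u.choose t : ℤ) * ((l + t).choose u : ℤ)), fun k => ?_⟩
  dsimp only
  rw [h1 k, h2 k, Finset.sum_mul_sum]
  calc ∑ l ∈ range (N1 + 1), ∑ t ∈ range (N2 + 1),
        (c1 l * (Bf l k : ℤ)) * (c2 t * (Bf t k : ℤ))
      = ∑ l ∈ range (N1 + 1), ∑ t ∈ range (N2 + 1), c1 l * c2 t *
          ∑ u ∈ range (N1 + N2 + 1),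
            (u.choose l : ℤ) * (u.choose t : ℤ) * ((l + t).choose u : ℤ) * (Bf u k : ℤ) := by
        refine Finset.sum_congr rfl fun l hl => Finset.sum_congr rfl fun t ht => ?_
        have : (c1 l * (Bf l k : ℤ)) * (c2 t * (Bf t k : ℤ))
            = c1 l * c2 t * ((Bf l k : ℤ) * (Bf t k : ℤ)) := by ring
        rw [this, prod_expand l t k]
        congr 1
        refine Finset.sum_subset (Finset.range_subset_range.mpr (by simp at hl ht; omega)) ?_
        intro u _ hnu
        have : (l + t).choose u = 0 := Nat.choose_eq_zero_of_lt (by simp at hnu; omega)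
        simp [this]
    _ = ∑ l ∈ range (N1 + 1), ∑ t ∈ range (N2 + 1), ∑ u ∈ range (N1 + N2 + 1),
          c1 l * c2 t *
            ((u.choose l : ℤ) * (u.choose t : ℤ) * ((l + t).choose u : ℤ) * (Bf u k : ℤ)) := by
        exact Finset.sum_congr rfl fun l _ => Finset.sum_congr rfl fun t _ => Finset.mul_sum _ _ _
    _ = ∑ l ∈ range (N1 + 1), ∑ u ∈ range (N1 + N2 + 1), ∑ t ∈ range (N2 + 1),
          c1 l * c2 t *
            ((u.choose l : ℤ) * (u.choose t : ℤ) * ((l + t).choose u : ℤ) * (Bf u k : ℤ)) :=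
        Finset.sum_congr rfl fun l _ => Finset.sum_comm
    _ = ∑ u ∈ range (N1 + N2 + 1), ∑ l ∈ range (N1 + 1), ∑ t ∈ range (N2 + 1),
          c1 l * c2 t *
            ((u.choose l : ℤ) * (u.choose t : ℤ) * ((l + t).choose u : ℤ) * (Bf u k : ℤ)) :=
        Finset.sum_comm
    _ = ∑ u ∈ range (N1 + N2 + 1),
          (∑ l ∈ range (N1 + 1), ∑ t ∈ range (N2 + 1),
            c1 l * c2 t * ((u.choose l : ℤ) * (u.choose t : ℤ) * ((l + t).choose u : ℤ)))
            * (Bf u k : ℤ) := by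
        refine Finset.sum_congr rfl fun u _ => ?_
        rw [Finset.sum_mul]
        refine Finset.sum_congr rfl fun l _ => ?_
        rw [Finset.sum_mul]
        exact Finset.sum_congr rfl fun t _ => by ring

lemma isGood_finsetSum {α : Type*} (s : Finset α) (F : α → ℕ → ℤ)
    (h : ∀ a ∈ s, IsGood (F a)) : IsGood (fun k => ∑ a ∈ s, F a k) := by
  classical
  revert h
  refine Finset.induction_on s ?_ ?_
  · intro _
    exact IsGood.congr (fun k => by simp) (isGood_const 0)
  · intro a s ha IH h
    exact IsGood.congr (fun k => Finset.sum_insert ha)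
      ((h a (Finset.mem_insert_self a s)).add (IH fun b hb => h b (Finset.mem_insert_of_mem hb)))



lemma isGood_cBj (j r : ℕ) (hr : 0 < r) :
    IsGood (fun k => ((((k + j).choose (2 * j)) ^ r * ((2 * j).choose j) : ℕ) : ℤ)) := by
  obtain ⟨N, μ, h⟩ := pow_good j (r - 1)
  refine ⟨N, fun l => (l.choose j : ℤ) * μ l, fun k => ?_⟩
  have hxr : (((k + j).choose (2 * j) : ℤ)) ^ r
      = (((k + j).choose (2 * j) : ℤ)) ^ (r - 1) * ((k + j).choose (2 * j) : ℤ) := by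
    rw [← pow_succ]
    congr 1
    omega
  have h2 : ((((k + j).choose (2 * j)) ^ r * ((2 * j).choose j) : ℕ) : ℤ)
      = (((k + j).choose (2 * j) : ℤ)) ^ (r - 1) * (Bf j k : ℤ) := by
    rw [Bf_def]
    push_cast
    rw [hxr]
    ring
  dsimp only
  rw [h2, h k]

lemma isGood_coeff_schmidt (r : ℕ) (hr : 0 < r) (d : ℕ →₀ ℕ) :
    IsGood (fun k => MvPolynomial.coeff d (schmidtMv r k)) := by
  classical
  have hco : ∀ k : ℕ, MvPolynomial.coeff d (schmidtMv r k)
      = ∑ j ∈ range (k + 1), ((((k + j).choose (2 * j)) ^ r * ((2 * j).choose j) : ℕ) : ℤ) *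
          (if (Finsupp.single j 1 : ℕ →₀ ℕ) = d then 1 else 0) := by
    intro k
    rw [schmidtMv, MvPolynomial.coeff_sum]
    exact Finset.sum_congr rfl fun j _ => by
      rw [MvPolynomial.coeff_C_mul, MvPolynomial.coeff_X']
  by_cases h : ∃ j0 : ℕ, (Finsupp.single j0 1 : ℕ →₀ ℕ) = d
  · obtain ⟨j0, hj0⟩ := h
    subst hj0
    refine IsGood.congr (g := fun k =>
      ((((k + j0).choose (2 * j0)) ^ r * ((2 * j0).choose j0) : ℕ) : ℤ)) ?_ (isGood_cBj j0 r hr)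
    intro k
    rw [hco k]
    have hsingle : ∀ j : ℕ, ((Finsupp.single j 1 : ℕ →₀ ℕ) = Finsupp.single j0 1) ↔ j = j0 :=
      fun j => ⟨fun hh => Finsupp.single_left_injective one_ne_zero hh, fun hh => by rw [hh]⟩
    simp only [hsingle, mul_ite, mul_one, mul_zero]
    rw [Finset.sum_ite_eq' (range (k + 1)) j0
      (fun j => ((((k + j).choose (2 * j)) ^ r * ((2 * j).choose j) : ℕ) : ℤ))]
    by_cases hk : j0 ∈ range (k + 1)
    · rw [if_pos hk]
    · rw [if_neg hk]
      have hk' : k < j0 := by simpa using hk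
      have : (k + j0).choose (2 * j0) = 0 := Nat.choose_eq_zero_of_lt (by omega)
      rw [this, zero_pow (by omega : r ≠ 0)]
      simp
  · refine IsGood.congr (g := fun _ => 0) ?_ (isGood_const 0)
    intro k
    rw [hco k]
    refine Finset.sum_eq_zero fun j _ => ?_
    have : ¬ ((Finsupp.single j 1 : ℕ →₀ ℕ) = d) := fun hh => h ⟨j, hh⟩
    simp [this]

lemma isGood_coeff_pow (r m : ℕ) (hr : 0 < r) (d : ℕ →₀ ℕ) :
    IsGood (fun k => MvPolynomial.coeff d ((schmidtMv r k) ^ m)) := by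
  classical
  induction m generalizing d with
  | zero =>
      refine IsGood.congr (g := fun _ => if (0 : ℕ →₀ ℕ) = d then 1 else 0) ?_
        (isGood_const _)
      intro k
      rw [pow_zero, MvPolynomial.coeff_one]
  | succ m IH =>
      refine IsGood.congr (g := fun k => ∑ x ∈ Finset.HasAntidiagonal.antidiagonal d,
        MvPolynomial.coeff x.1 ((schmidtMv r k) ^ m) * MvPolynomial.coeff x.2 (schmidtMv r k)) ?_
        ?_
      · intro k
        rw [pow_succ, MvPolynomial.coeff_mul]
      · exact isGood_finsetSum _ _ fun x _ => (IH x.1).mul (isGood_coeff_schmidt r hr x.2)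

lemma isGood_B1pow (a : ℕ) : IsGood (fun k => ((k : ℤ)) ^ a * ((k : ℤ) + 1) ^ a) := by
  have hb : ∀ k : ℕ, (Bf 1 k : ℤ) = (k : ℤ) * ((k : ℤ) + 1) := by
    intro k
    have h := Nat.add_one_mul_choose_eq k 1
    simp only [Nat.succ_eq_add_one, Nat.choose_one_right] at h
    have h2 : Bf 1 k = (k + 1) * k := by
      rw [Bf_def]
      have : (2 * 1).choose 1 = 2 := by decide
      rw [this, show 2 * 1 = 1 + 1 from rfl]
      omega
    rw [h2]; push_cast; ring
  induction a with
  | zero => exact IsGood.congr (g := fun _ => 1) (fun k => by simp) (isGood_const 1)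
  | succ a IH =>
      refine IsGood.congr (g := fun k => ((k : ℤ) ^ a * ((k : ℤ) + 1) ^ a) * (Bf 1 k : ℤ))
        ?_ (IH.mul ⟨1, fun l => if l = 1 then 1 else 0, fun k => ?_⟩)
      · intro k
        show ((k : ℤ)) ^ (a + 1) * ((k : ℤ) + 1) ^ (a + 1)
          = (k : ℤ) ^ a * ((k : ℤ) + 1) ^ a * (Bf 1 k : ℤ)
        rw [hb k]; ring
      · simp [Bf_zero]


end SchmidtAux

/-- For positive integers `r`, `m`, `n` and a nonnegative integer `a`, every coefficient of
`∑_{k=0}^{n−1} (−1)^k(2k+1)·k^a·(k+1)^a·S_k^{(r)}(x_0,…,x_k)^m` is divisible by `n`. -/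
theorem sum_alt_schmidtMv_pow_weighted_dvd (r m n a : ℕ) (hr : 0 < r) (hm : 0 < m)
    (hn : 0 < n) :
    ∀ d : ℕ →₀ ℕ,
      (n : ℤ) ∣ MvPolynomial.coeff d
        (∑ k ∈ Finset.range n,
          ((-1 : ℤ) ^ k * (2 * (k : ℤ) + 1) * (k : ℤ) ^ a * ((k : ℤ) + 1) ^ a) •
            (schmidtMv r k) ^ m) := by
  intro d
  have hgood : SchmidtAux.IsGood (fun k => ((k : ℤ)) ^ a * ((k : ℤ) + 1) ^ a *
      MvPolynomial.coeff d ((schmidtMv r k) ^ m)) :=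
    (SchmidtAux.isGood_B1pow a).mul (SchmidtAux.isGood_coeff_pow r m hr d)
  obtain ⟨N, c, hc⟩ := hgood
  have hc' : ∀ k : ℕ, ((k : ℤ)) ^ a * ((k : ℤ) + 1) ^ a *
      MvPolynomial.coeff d ((schmidtMv r k) ^ m)
      = ∑ l ∈ Finset.range (N + 1), c l * (SchmidtAux.Bf l k : ℤ) := hc
  have hco : MvPolynomial.coeff d
      (∑ k ∈ Finset.range n,
        ((-1 : ℤ) ^ k * (2 * (k : ℤ) + 1) * (k : ℤ) ^ a * ((k : ℤ) + 1) ^ a) •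
          (schmidtMv r k) ^ m)
      = ∑ k ∈ Finset.range n, (-1 : ℤ) ^ k * (2 * (k : ℤ) + 1) *
          ((k : ℤ) ^ a * ((k : ℤ) + 1) ^ a * MvPolynomial.coeff d ((schmidtMv r k) ^ m)) := by
    rw [MvPolynomial.coeff_sum]
    refine Finset.sum_congr rfl fun k _ => ?_
    rw [MvPolynomial.coeff_smul, smul_eq_mul]
    ring
  rw [hco]
  have key : (∑ k ∈ Finset.range n, (-1 : ℤ) ^ k * (2 * (k : ℤ) + 1) *
          ((k : ℤ) ^ a * ((k : ℤ) + 1) ^ a * MvPolynomial.coeff d ((schmidtMv r k) ^ m)))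
      = ∑ l ∈ Finset.range (N + 1),
          c l * ((-1 : ℤ) ^ (n + 1) * n * ((n + l).choose l : ℤ) * ((n - 1).choose l : ℤ)) := by
    calc ∑ k ∈ Finset.range n, (-1 : ℤ) ^ k * (2 * (k : ℤ) + 1) *
            ((k : ℤ) ^ a * ((k : ℤ) + 1) ^ a * MvPolynomial.coeff d ((schmidtMv r k) ^ m))
        = ∑ k ∈ Finset.range n, ∑ l ∈ Finset.range (N + 1),
            c l * ((-1 : ℤ) ^ k * (2 * (k : ℤ) + 1) * (SchmidtAux.Bf l k : ℤ)) := by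
          refine Finset.sum_congr rfl fun k _ => ?_
          rw [hc' k, Finset.mul_sum]
          exact Finset.sum_congr rfl fun l _ => by ring
      _ = ∑ l ∈ Finset.range (N + 1), ∑ k ∈ Finset.range n,
            c l * ((-1 : ℤ) ^ k * (2 * (k : ℤ) + 1) * (SchmidtAux.Bf l k : ℤ)) :=
          Finset.sum_comm
      _ = ∑ l ∈ Finset.range (N + 1),
            c l * ((-1 : ℤ) ^ (n + 1) * n * ((n + l).choose l : ℤ) * ((n - 1).choose l : ℤ)) := by
          refine Finset.sum_congr rfl fun l _ => ?_
          rw [← Finset.mul_sum, SchmidtAux.sum_B l n]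
  rw [key]
  refine Finset.dvd_sum fun l _ => ⟨c l * ((-1 : ℤ) ^ (n + 1) * ((n + l).choose l : ℤ) *
    ((n - 1).choose l : ℤ)), by ring⟩
end

section
/- Suppose that for a fixed nonnegative integer m and positive integer r, the integers b_{m,k}^{(r)} (m ≤ k ≤ rm) satisfy that C(k,m) divides b_{m,k}^{(r)} for each k. Define, for m ≤ j ≤ (r+1)m, b_{m,j}^{(r+1)} := C(j,m) · ∑_{k=m}^{rm} (b_{m,k}^{(r)} / C(k,m)) · C(m, j−k) · C(m+k, 2m). Then each b_{m,j}^{(r+1)} is an integer divisible by C(j,m), and if additionally C(ℓ+m,2m)^r · C(2m,m) = ∑_{k=m}^{rm} b_{m,k}^{(r)} · C(ℓ+k,2k) · C(2k,k) holds for all nonnegative integers ℓ, then C(ℓ+m,2m)^{r+1} · C(2m,m) = ∑_{j=m}^{(r+1)m} b_{m,j}^{(r+1)} · C(ℓ+j,2j) · C(2j,j) holds for all nonnegative integers ℓ. -/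
open Finset


def tTerm (m k x s : ℕ) : ℤ :=
  (m.choose s : ℤ) * ((k+s).choose m : ℤ) * ((x+(k+s)).choose (k+s) : ℤ) * (x.choose (k+s) : ℤ)

def wTerm (m k x s : ℕ) : ℤ :=
  -2 * s * ((k:ℤ) + s - m) * (m.choose s : ℤ) * ((k+s).choose m : ℤ) *
    ((x+(k+s)).choose (k+s) : ℤ) * (x.choose (k+s-1) : ℤ)

def tSum (m k l : ℕ) : ℤ := ∑ s ∈ Finset.range (m+1), tTerm m k l s


theorem cert (m k l s : ℕ) :
    ((l:ℤ)+1-m) * ((l:ℤ)+1-k) * tTerm m k (l+1) s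
      - ((l:ℤ)+1+m) * ((l:ℤ)+1+k) * tTerm m k l s
      = wTerm m k l (s+1) - wTerm m k l s := by
  unfold tTerm wTerm
  simp only [← Nat.add_assoc, Nat.add_sub_cancel]
  rcases lt_or_ge m s with hms | hms
  · rw [Nat.choose_eq_zero_of_lt hms, Nat.choose_eq_zero_of_lt (by omega : m < s+1)]
    push_cast; ring
  rcases lt_or_ge (k+s) m with hkm | hkm
  · rw [Nat.choose_eq_zero_of_lt hkm]
    rcases eq_or_lt_of_le (show k+s+1 ≤ m by omega) with he | hlt
    · have hm : (m:ℤ) = (k:ℤ)+(s:ℤ)+1 := by exact_mod_cast he.symm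
      push_cast; rw [hm]; ring
    · rw [Nat.choose_eq_zero_of_lt hlt]
      push_cast; ring
  rcases lt_or_ge (l+1) (k+s) with hl | hl
  · rw [Nat.choose_eq_zero_of_lt (show l+1 < k+s by omega),
        Nat.choose_eq_zero_of_lt (show l < k+s by omega),
        Nat.choose_eq_zero_of_lt (show l < k+s-1 by omega)]
    push_cast; ring
  rcases eq_or_lt_of_le hl with he | hll
  · -- k+s = l+1 boundary case
    have hc : (k:ℤ) + s = (l:ℤ) + 1 := by exact_mod_cast he
    rw [Nat.choose_eq_zero_of_lt (show l < k+s by omega)]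
    rw [show l+1+k+s = (2*l+1)+1 by omega, show l+k+s = 2*l+1 by omega]
    rw [he, Nat.choose_succ_succ (2*l+1) l, Nat.choose_symm_half l,
        Nat.add_sub_cancel, Nat.choose_self, Nat.choose_self]
    push_cast
    rw [show (k:ℤ) = (l:ℤ)+1-s from by linarith]
    ring
  -- generic case : k+s ≤ l
  have hNl : k+s ≤ l := by omega
  rcases Nat.eq_zero_or_pos (k+s) with h0 | hN1
  · obtain ⟨hk0, hs0⟩ : k = 0 ∧ s = 0 := by omega
    have hm0 : m = 0 := by omega
    subst hk0; subst hs0; subst hm0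
    simp
  -- main generic computation
  rw [show l+1+k+s = l+k+s+1 from by omega]
  apply Int.cast_injective (α := ℚ)
  push_cast
  have hden1 : ((l:ℚ)+1) ≠ 0 := by positivity
  have hden2 : ((l:ℚ)+1-(k:ℚ)-(s:ℚ)) ≠ 0 := by
    have h1 : ((k:ℚ))+(s:ℚ) ≤ (l:ℚ) := by exact_mod_cast Nat.cast_le.mpr hNl
    linarith
  have hden3 : ((s:ℚ)+1) ≠ 0 := by positivity
  have hden4 : ((k:ℚ)+(s:ℚ)+1-(m:ℚ)) ≠ 0 := by
    have h1 : ((m:ℚ)) ≤ (k:ℚ)+(s:ℚ) := by exact_mod_cast Nat.cast_le.mpr hkm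
    linarith
  have hden5 : ((k:ℚ)+(s:ℚ)+1) ≠ 0 := by positivity
  -- cast relations
  have h5 := congrArg (Nat.cast (R := ℚ)) (Nat.choose_mul_succ_eq (l+k+s) (k+s))
  push_cast [Nat.cast_sub (show k+s ≤ l+k+s+1 by omega)] at h5
  have e5 : (((l+k+s+1).choose (k+s) : ℕ) : ℚ)
      = ((l:ℚ)+(k:ℚ)+(s:ℚ)+1) * ((l+k+s).choose (k+s) : ℕ) / ((l:ℚ)+1) := by
    rw [eq_div_iff hden1]; linear_combination -h5
  have h6 := congrArg (Nat.cast (R := ℚ)) (Nat.choose_mul_succ_eq l (k+s))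
  push_cast [Nat.cast_sub (show k+s ≤ l+1 by omega)] at h6
  have e6 : (((l+1).choose (k+s) : ℕ) : ℚ)
      = ((l:ℚ)+1) * (l.choose (k+s) : ℕ) / ((l:ℚ)+1-(k:ℚ)-(s:ℚ)) := by
    rw [eq_div_iff hden2]; linear_combination -h6
  have h7 := congrArg (Nat.cast (R := ℚ)) (Nat.choose_succ_right_eq m s)
  push_cast [Nat.cast_sub (show s ≤ m by omega)] at h7
  have e7 : ((m.choose (s+1) : ℕ) : ℚ) = ((m:ℚ)-(s:ℚ)) * (m.choose s : ℕ) / ((s:ℚ)+1) := by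
    rw [eq_div_iff hden3]; linear_combination h7
  have h8 := congrArg (Nat.cast (R := ℚ)) (Nat.choose_mul_succ_eq (k+s) m)
  push_cast [Nat.cast_sub (show m ≤ k+s+1 by omega)] at h8
  have e8 : (((k+s+1).choose m : ℕ) : ℚ)
      = ((k:ℚ)+(s:ℚ)+1) * ((k+s).choose m : ℕ) / ((k:ℚ)+(s:ℚ)+1-(m:ℚ)) := by
    rw [eq_div_iff hden4]; linear_combination -h8
  have h9 := congrArg (Nat.cast (R := ℚ)) (Nat.choose_succ_right_eq (l+k+s+1) (k+s))
  push_cast [Nat.cast_sub (show k+s ≤ l+k+s+1 by omega)] at h9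
  have e9 : (((l+k+s+1).choose (k+s+1) : ℕ) : ℚ)
      = ((l:ℚ)+1) * ((l+k+s+1).choose (k+s) : ℕ) / ((k:ℚ)+(s:ℚ)+1) := by
    rw [eq_div_iff hden5]; linear_combination h9
  obtain ⟨n, hn⟩ : ∃ n, k+s = n+1 := ⟨k+s-1, by omega⟩
  have h10 := congrArg (Nat.cast (R := ℚ)) (Nat.choose_succ_right_eq l n)
  push_cast [Nat.cast_sub (show n ≤ l by omega)] at h10
  have e10 : ((l.choose (k+s-1) : ℕ) : ℚ)
      = ((k:ℚ)+(s:ℚ)) * (l.choose (k+s) : ℕ) / ((l:ℚ)+1-(k:ℚ)-(s:ℚ)) := by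
    rw [eq_div_iff hden2, show k+s-1 = n from by omega]
    have hcast : ((n:ℚ)+1) = (k:ℚ)+(s:ℚ) := by
      have : ((k+s : ℕ) : ℚ) = ((n+1 : ℕ) : ℚ) := by rw [hn]
      push_cast at this; linarith
    rw [show (k+s) = n+1 from hn]
    linear_combination -h10 + (((l.choose n : ℕ) : ℚ) + ((l.choose (n+1) : ℕ) : ℚ)) * hcast
  rw [e9, e5, e6, e7, e8, e10]
  field_simp
  ring

theorem recurT (m k l : ℕ) :
    ((l:ℤ)+1-m) * ((l:ℤ)+1-k) * tSum m k (l+1)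
      = ((l:ℤ)+1+m) * ((l:ℤ)+1+k) * tSum m k l := by
  have h : ∑ s ∈ Finset.range (m+1),
      (((l:ℤ)+1-m) * ((l:ℤ)+1-k) * tTerm m k (l+1) s
        - ((l:ℤ)+1+m) * ((l:ℤ)+1+k) * tTerm m k l s)
      = ∑ s ∈ Finset.range (m+1), (wTerm m k l (s+1) - wTerm m k l s) :=
    Finset.sum_congr rfl (fun s _ => cert m k l s)
  rw [Finset.sum_range_sub (fun s => wTerm m k l s)] at h
  have hW1 : wTerm m k l (m+1) = 0 := by
    unfold wTerm
    rw [Nat.choose_eq_zero_of_lt (by omega : m < m+1)]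
    push_cast; ring
  have hW0 : wTerm m k l 0 = 0 := by
    unfold wTerm; push_cast; ring
  rw [hW1, hW0, Finset.sum_sub_distrib, ← Finset.mul_sum, ← Finset.mul_sum] at h
  unfold tSum
  linarith [h]

theorem recurR (m k l : ℕ) (hmk : m ≤ k) (hkl : k ≤ l) :
    ((l:ℤ)+1-m) * ((l:ℤ)+1-k) *
      ((k.choose m : ℤ) * (((l+1)+m).choose (2*m) : ℤ) * (((l+1)+k).choose (2*k) : ℤ) * ((2*k).choose k : ℤ))
    = ((l:ℤ)+1+m) * ((l:ℤ)+1+k) *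
      ((k.choose m : ℤ) * ((l+m).choose (2*m) : ℤ) * ((l+k).choose (2*k) : ℤ) * ((2*k).choose k : ℤ)) := by
  have hA := congrArg (Nat.cast (R := ℤ)) (Nat.choose_mul_succ_eq (l+m) (2*m))
  push_cast [Nat.cast_sub (show 2*m ≤ l+m+1 by omega)] at hA
  have hB := congrArg (Nat.cast (R := ℤ)) (Nat.choose_mul_succ_eq (l+k) (2*k))
  push_cast [Nat.cast_sub (show 2*k ≤ l+k+1 by omega)] at hB
  rw [show (l+1)+m = l+m+1 by omega, show (l+1)+k = l+k+1 by omega]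
  linear_combination (-((l:ℤ)+1-k) * (k.choose m : ℤ) * (((l+k+1).choose (2*k) : ℤ)) * ((2*k).choose k : ℤ)) * hA
    + (-((l:ℤ)+m+1) * (k.choose m : ℤ) * (((l+m).choose (2*m) : ℤ)) * ((2*k).choose k : ℤ)) * hB

theorem keyIdent (m k : ℕ) (hmk : m ≤ k) : ∀ l : ℕ,
    ((m+k).choose (2*m) : ℤ) * tSum m k l
      = (k.choose m : ℤ) * ((l+m).choose (2*m) : ℤ) * ((l+k).choose (2*k) : ℤ) * ((2*k).choose k : ℤ) := by
  intro l
  induction l with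
  | zero =>
    rcases Nat.eq_zero_or_pos k with hk0 | hk0
    · subst hk0
      have hm0 : m = 0 := by omega
      subst hm0
      simp [tSum, tTerm]
    · have h1 : tSum m k 0 = 0 := by
        apply Finset.sum_eq_zero
        intro s _
        unfold tTerm
        rw [Nat.choose_eq_zero_of_lt (show 0 < k+s by omega)]
        push_cast; ring
      rw [h1, Nat.choose_eq_zero_of_lt (show 0+k < 2*k by omega)]
      push_cast; ring
  | succ l ih =>
    rcases lt_trichotomy (l+1) k with hlt | heq | hgt
    · -- l+1 < k : both sides vanish
      have h1 : tSum m k (l+1) = 0 := by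
        apply Finset.sum_eq_zero
        intro s _
        unfold tTerm
        rw [Nat.choose_eq_zero_of_lt (show l+1 < k+s by omega)]
        push_cast; ring
      rw [h1, Nat.choose_eq_zero_of_lt (show (l+1)+k < 2*k by omega)]
      push_cast; ring
    · -- l+1 = k : single surviving term
      have h1 : tSum m k (l+1) = tTerm m k (l+1) 0 := by
        apply Finset.sum_eq_single_of_mem 0 (by simp)
        intro s _ hs
        unfold tTerm
        rw [Nat.choose_eq_zero_of_lt (show l+1 < k+s by omega)]
        push_cast; ring
      rw [h1]
      unfold tTerm
      subst heq
      rw [show (l+1)+(l+1+0) = 2*(l+1) by ring, show l+1+0 = l+1 by ring,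
          Nat.choose_self, Nat.choose_zero_right, Nat.choose_self,
          show m+(l+1) = (l+1)+m by ring]
      push_cast; ring
    · -- k ≤ l : inductive step via recurrences
      have hkl : k ≤ l := by omega
      have hne : ((l:ℤ)+1-m) * ((l:ℤ)+1-k) ≠ 0 := by
        have h1 : (m:ℤ) ≤ l := by exact_mod_cast le_trans hmk hkl
        have h2 : (k:ℤ) ≤ l := by exact_mod_cast hkl
        have : ((l:ℤ)+1-m) > 0 := by linarith
        have : ((l:ℤ)+1-k) > 0 := by linarith
        positivity
      apply mul_left_cancel₀ hne
      calc ((l:ℤ)+1-m) * ((l:ℤ)+1-k) * (((m+k).choose (2*m) : ℤ) * tSum m k (l+1))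
          = ((m+k).choose (2*m) : ℤ) * (((l:ℤ)+1-m) * ((l:ℤ)+1-k) * tSum m k (l+1)) := by ring
        _ = ((m+k).choose (2*m) : ℤ) * (((l:ℤ)+1+m) * ((l:ℤ)+1+k) * tSum m k l) := by rw [recurT]
        _ = ((l:ℤ)+1+m) * ((l:ℤ)+1+k) * (((m+k).choose (2*m) : ℤ) * tSum m k l) := by ring
        _ = ((l:ℤ)+1+m) * ((l:ℤ)+1+k) *
            ((k.choose m : ℤ) * ((l+m).choose (2*m) : ℤ) * ((l+k).choose (2*k) : ℤ) * ((2*k).choose k : ℤ)) := by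
            rw [ih]
        _ = ((l:ℤ)+1-m) * ((l:ℤ)+1-k) *
            ((k.choose m : ℤ) * (((l+1)+m).choose (2*m) : ℤ) * (((l+1)+k).choose (2*k) : ℤ) * ((2*k).choose k : ℤ)) := by
            rw [recurR m k l hmk hkl]

theorem trinom (l j : ℕ) : (l+j).choose (2*j) * (2*j).choose j = (l+j).choose j * l.choose j := by
  rcases le_or_gt j l with h | h
  · have := Nat.choose_mul (n := l+j) (k := 2*j) (s := j) (by omega)
    rw [this]
    congr 2 <;> omega
  · simp [Nat.choose_eq_zero_of_lt (show l+j < 2*j by omega), Nat.choose_eq_zero_of_lt h]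

theorem innerSum (m r k ℓ : ℕ) (hk1 : m ≤ k) (hk2 : k ≤ r*m) :
    ∑ j ∈ Finset.Icc m ((r+1)*m),
      (j.choose m : ℤ) * (if k ≤ j then (m.choose (j-k) : ℤ) else 0) * ((m+k).choose (2*m) : ℤ)
        * ((ℓ+j).choose (2*j) : ℤ) * ((2*j).choose j : ℤ)
    = (k.choose m : ℤ) * ((ℓ+m).choose (2*m) : ℤ) * ((ℓ+k).choose (2*k) : ℤ) * ((2*k).choose k : ℤ) := by
  have hsub : Finset.Icc k (k+m) ⊆ Finset.Icc m ((r+1)*m) := by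
    intro j hj
    simp only [Finset.mem_Icc] at *
    constructor <;> [omega; nlinarith [hj.2]]
  rw [← Finset.sum_subset hsub]
  · rw [← Finset.Ico_add_one_right_eq_Icc, Finset.sum_Ico_eq_sum_range, show k+m+1-k = m+1 by omega]
    rw [← keyIdent m k hk1 ℓ]
    unfold tSum
    rw [Finset.mul_sum]
    apply Finset.sum_congr rfl
    intro s _
    rw [if_pos (by omega : k ≤ k+s), show k+s-k = s by omega]
    unfold tTerm
    have ht := congrArg (Nat.cast (R := ℤ)) (trinom ℓ (k+s))
    push_cast at ht
    rw [show (k+s).choose m = ((k+s).choose m) from rfl]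
    push_cast
    linear_combination ((m+k).choose (2*m) : ℤ) * ((k+s).choose m : ℤ) * ((m.choose s : ℤ)) * ht
  · intro j hj hnot
    simp only [Finset.mem_Icc] at hj hnot
    rcases lt_or_ge j k with h | h
    · rw [if_neg (by omega)]
      ring
    · rw [if_pos h, Nat.choose_eq_zero_of_lt (show m < j - k by omega)]
      push_cast; ring

/-- Induction step for Lemma 2.1: given integers `b k` (for `m ≤ k ≤ rm`), each divisible by
`C(k,m)`, define `b' j := C(j,m) · ∑_{k=m}^{rm} (b k / C(k,m)) · C(m,j−k) · C(m+k,2m)`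
(where `C(m,j−k)` is taken to be `0` when `k > j`).  Then each `b' j` is divisible by
`C(j,m)`, and if `C(ℓ+m,2m)^r·C(2m,m) = ∑_{k=m}^{rm} b k·C(ℓ+k,2k)·C(2k,k)` for every `ℓ`,
then `C(ℓ+m,2m)^{r+1}·C(2m,m) = ∑_{j=m}^{(r+1)m} b' j·C(ℓ+j,2j)·C(2j,j)` for every `ℓ`. -/
theorem schmidt_lemma_induction_step (m r : ℕ) (hr : 0 < r) (b : ℕ → ℤ)
    (hdvd : ∀ k, m ≤ k → k ≤ r * m → ((k.choose m : ℤ)) ∣ b k) :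
    (∀ j, m ≤ j → j ≤ (r + 1) * m →
      ((j.choose m : ℤ)) ∣
        (j.choose m : ℤ) *
          ∑ k ∈ Finset.Icc m (r * m),
            (b k / (k.choose m : ℤ)) * (if k ≤ j then (m.choose (j - k) : ℤ) else 0) *
              ((m + k).choose (2 * m) : ℤ)) ∧
    ((∀ ℓ : ℕ,
        (((ℓ + m).choose (2 * m) : ℤ)) ^ r * ((2 * m).choose m : ℤ) =
          ∑ k ∈ Finset.Icc m (r * m),
            b k * ((ℓ + k).choose (2 * k) : ℤ) * ((2 * k).choose k : ℤ)) →
      ∀ ℓ : ℕ,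
        (((ℓ + m).choose (2 * m) : ℤ)) ^ (r + 1) * ((2 * m).choose m : ℤ) =
          ∑ j ∈ Finset.Icc m ((r + 1) * m),
            ((j.choose m : ℤ) *
              ∑ k ∈ Finset.Icc m (r * m),
                (b k / (k.choose m : ℤ)) * (if k ≤ j then (m.choose (j - k) : ℤ) else 0) *
                  ((m + k).choose (2 * m) : ℤ)) *
              ((ℓ + j).choose (2 * j) : ℤ) * ((2 * j).choose j : ℤ)) := by
  constructor
  · intro j _ _
    exact dvd_mul_right _ _
  · intro H ℓ
    symm
    calc ∑ j ∈ Finset.Icc m ((r + 1) * m),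
            ((j.choose m : ℤ) *
              ∑ k ∈ Finset.Icc m (r * m),
                (b k / (k.choose m : ℤ)) * (if k ≤ j then (m.choose (j - k) : ℤ) else 0) *
                  ((m + k).choose (2 * m) : ℤ)) *
              ((ℓ + j).choose (2 * j) : ℤ) * ((2 * j).choose j : ℤ)
        = ∑ j ∈ Finset.Icc m ((r + 1) * m), ∑ k ∈ Finset.Icc m (r * m),
            (b k / (k.choose m : ℤ)) *
              ((j.choose m : ℤ) * (if k ≤ j then (m.choose (j - k) : ℤ) else 0) *
                ((m + k).choose (2 * m) : ℤ) * ((ℓ + j).choose (2 * j) : ℤ) *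
                ((2 * j).choose j : ℤ)) := by
          refine Finset.sum_congr rfl fun j _ => ?_
          rw [Finset.mul_sum, Finset.sum_mul, Finset.sum_mul]
          exact Finset.sum_congr rfl fun k _ => by ring
      _ = ∑ k ∈ Finset.Icc m (r * m), ∑ j ∈ Finset.Icc m ((r + 1) * m),
            (b k / (k.choose m : ℤ)) *
              ((j.choose m : ℤ) * (if k ≤ j then (m.choose (j - k) : ℤ) else 0) *
                ((m + k).choose (2 * m) : ℤ) * ((ℓ + j).choose (2 * j) : ℤ) *
                ((2 * j).choose j : ℤ)) := Finset.sum_comm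
      _ = ∑ k ∈ Finset.Icc m (r * m),
            (b k / (k.choose m : ℤ)) *
              ((k.choose m : ℤ) * ((ℓ+m).choose (2*m) : ℤ) * ((ℓ+k).choose (2*k) : ℤ)
                * ((2*k).choose k : ℤ)) := by
          refine Finset.sum_congr rfl fun k hk => ?_
          rw [← Finset.mul_sum]
          congr 1
          exact innerSum m r k ℓ (Finset.mem_Icc.mp hk).1 (Finset.mem_Icc.mp hk).2
      _ = ∑ k ∈ Finset.Icc m (r * m),
            (b k * ((ℓ+k).choose (2*k) : ℤ) * ((2*k).choose k : ℤ)) * ((ℓ+m).choose (2*m) : ℤ) := by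
          refine Finset.sum_congr rfl fun k hk => ?_
          have hc := Int.ediv_mul_cancel (hdvd k (Finset.mem_Icc.mp hk).1 (Finset.mem_Icc.mp hk).2)
          calc (b k / (k.choose m : ℤ)) *
              ((k.choose m : ℤ) * ((ℓ+m).choose (2*m) : ℤ) * ((ℓ+k).choose (2*k) : ℤ)
                * ((2*k).choose k : ℤ))
              = (b k / (k.choose m : ℤ) * (k.choose m : ℤ)) * (((ℓ+m).choose (2*m) : ℤ)
                  * ((ℓ+k).choose (2*k) : ℤ) * ((2*k).choose k : ℤ)) := by ring
            _ = b k * (((ℓ+m).choose (2*m) : ℤ) * ((ℓ+k).choose (2*k) : ℤ)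
                  * ((2*k).choose k : ℤ)) := by rw [hc]
            _ = (b k * ((ℓ+k).choose (2*k) : ℤ) * ((2*k).choose k : ℤ)) * ((ℓ+m).choose (2*m) : ℤ) := by
                ring
      _ = (∑ k ∈ Finset.Icc m (r * m),
            b k * ((ℓ+k).choose (2*k) : ℤ) * ((2*k).choose k : ℤ)) * ((ℓ+m).choose (2*m) : ℤ) := by
          rw [Finset.sum_mul]
      _ = ((((ℓ + m).choose (2 * m) : ℤ)) ^ r * ((2 * m).choose m : ℤ)) * ((ℓ+m).choose (2*m) : ℤ) := by
          rw [← H ℓ]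
      _ = (((ℓ + m).choose (2 * m) : ℤ)) ^ (r + 1) * ((2 * m).choose m : ℤ) := by ring
end
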